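/- arXiv:2404.13456 — 2 statements merged into one kernel-verified Lean document; each statement's English description precedes it below -/
import Mathlib

section
/- Let l, u be real numbers with l < u and let K ≥ 1 be a natural number. Define the degree-K Bernstein polynomial over-approximation of ReLU on [l,u] by g_K(z) = Σ_{k=0}^{K} max{0, l + (k/K)(u − l)} · C(K,k) · (u − z)^{K−k} (z − l)^k / (u − l)^K. Then for every z ∈ [l, u], max{0, z} ≤ g_K(z). -/
lemma bern_sum_one (x : ℝ) (K : ℕ) :
    ∑ k ∈ Finset.range (K + 1), (K.choose k : ℝ) * x ^ k * (1 - x) ^ (K - k) = 1 := by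
  have h := add_pow x (1 - x) K
  simp only [add_sub_cancel, one_pow] at h
  conv_rhs => rw [h]
  exact Finset.sum_congr rfl (fun k _ => by ring)

lemma bern_sum_x (x : ℝ) (K : ℕ) (hK : 1 ≤ K) :
    ∑ k ∈ Finset.range (K + 1), (k : ℝ) * ((K.choose k : ℝ) * x ^ k * (1 - x) ^ (K - k))
      = K * x := by
  rw [Finset.sum_range_succ']
  simp only [Nat.cast_zero, zero_mul, add_zero]
  have hstep : ∀ k ∈ Finset.range K,
      ((k + 1 : ℕ) : ℝ) * ((K.choose (k + 1) : ℝ) * x ^ (k + 1) * (1 - x) ^ (K - (k + 1)))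
      = (K : ℝ) * x * (((K - 1).choose k : ℝ) * x ^ k * (1 - x) ^ ((K - 1) - k)) := by
    intro k hk
    rw [Finset.mem_range] at hk
    have h1 : (K : ℝ) * ((K - 1).choose k : ℝ) = ((K.choose (k + 1) : ℕ) : ℝ) * ((k + 1 : ℕ) : ℝ) := by
      rw [← Nat.cast_mul, ← Nat.cast_mul]
      congr 1
      have := Nat.add_one_mul_choose_eq (K - 1) k
      rw [Nat.sub_add_cancel hK] at this
      exact this
    have h2 : K - (k + 1) = (K - 1) - k := by omega
    rw [h2]
    have : x ^ (k + 1) = x * x ^ k := by ring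
    rw [this]
    push_cast at h1 ⊢
    linear_combination (-(x * x ^ k * (1 - x) ^ (K - 1 - k))) * h1
  calc ∑ k ∈ Finset.range K,
        ((k + 1 : ℕ) : ℝ) * ((K.choose (k + 1) : ℝ) * x ^ (k + 1) * (1 - x) ^ (K - (k + 1)))
      = ∑ k ∈ Finset.range K,
        (K : ℝ) * x * (((K - 1).choose k : ℝ) * x ^ k * (1 - x) ^ ((K - 1) - k)) :=
        Finset.sum_congr rfl hstep
    _ = (K : ℝ) * x * ∑ k ∈ Finset.range K,
        (((K - 1).choose k : ℝ) * x ^ k * (1 - x) ^ ((K - 1) - k)) := by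
        rw [Finset.mul_sum]
    _ = K * x := by
        have hb := bern_sum_one x (K - 1)
        rw [Nat.sub_add_cancel hK] at hb
        rw [hb, mul_one]

/-- Soundness of the Bernstein polynomial over-approximation of ReLU:
the degree-K Bernstein polynomial of ReLU on [l,u] upper-bounds ReLU on [l,u]. -/
theorem bernstein_over_approximates_relu
    (l u : ℝ) (hlu : l < u) (K : ℕ) (hK : 1 ≤ K) :
    ∀ z ∈ Set.Icc l u,
      max 0 z ≤ ∑ k ∈ Finset.range (K + 1),
        max 0 (l + ((k : ℝ) / (K : ℝ)) * (u - l)) * (K.choose k : ℝ) *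
          ((u - z) ^ (K - k) * (z - l) ^ k / (u - l) ^ K) := by
  intro z hz
  obtain ⟨hzl, hzu⟩ := hz
  have hul : (0 : ℝ) < u - l := by linarith
  set x : ℝ := (z - l) / (u - l) with hxdef
  have h1x : 1 - x = (u - z) / (u - l) := by
    rw [hxdef, one_sub_div hul.ne']
    congr 1
    ring
  have hKpos : (0 : ℝ) < (K : ℝ) := by exact_mod_cast hK
  -- rewrite each weight
  have hw : ∀ k ∈ Finset.range (K + 1),
      (K.choose k : ℝ) * ((u - z) ^ (K - k) * (z - l) ^ k / (u - l) ^ K)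
      = (K.choose k : ℝ) * x ^ k * (1 - x) ^ (K - k) := by
    intro k hk
    rw [Finset.mem_range] at hk
    rw [h1x, hxdef, div_pow, div_pow, mul_assoc, div_mul_div_comm]
    have hpow : (u - l) ^ k * (u - l) ^ (K - k) = (u - l) ^ K := by
      rw [← pow_add]
      congr 1
      omega
    rw [hpow]
    ring
  have hwnn : ∀ k ∈ Finset.range (K + 1),
      (0 : ℝ) ≤ (K.choose k : ℝ) * ((u - z) ^ (K - k) * (z - l) ^ k / (u - l) ^ K) := by
    intro k _
    apply mul_nonneg (Nat.cast_nonneg _)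
    apply div_nonneg
    · exact mul_nonneg (pow_nonneg (by linarith) _) (pow_nonneg (by linarith) _)
    · exact pow_nonneg (le_of_lt hul) _
  -- the sum with coefficients c_k = l + (k/K)(u-l) equals z
  have hrepr : ∑ k ∈ Finset.range (K + 1),
      (l + ((k : ℝ) / (K : ℝ)) * (u - l)) *
        ((K.choose k : ℝ) * ((u - z) ^ (K - k) * (z - l) ^ k / (u - l) ^ K)) = z := by
    have hsum_eq : ∑ k ∈ Finset.range (K + 1),
        (l + ((k : ℝ) / (K : ℝ)) * (u - l)) *
          ((K.choose k : ℝ) * ((u - z) ^ (K - k) * (z - l) ^ k / (u - l) ^ K))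
      = ∑ k ∈ Finset.range (K + 1),
        (l + ((k : ℝ) / (K : ℝ)) * (u - l)) *
          ((K.choose k : ℝ) * x ^ k * (1 - x) ^ (K - k)) :=
      Finset.sum_congr rfl (fun k hk => by rw [hw k hk])
    rw [hsum_eq]
    have hsplit : ∀ k ∈ Finset.range (K + 1),
        (l + ((k : ℝ) / (K : ℝ)) * (u - l)) *
          ((K.choose k : ℝ) * x ^ k * (1 - x) ^ (K - k))
        = l * ((K.choose k : ℝ) * x ^ k * (1 - x) ^ (K - k))
          + ((u - l) / K) * ((k : ℝ) * ((K.choose k : ℝ) * x ^ k * (1 - x) ^ (K - k))) := by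
      intro k _
      field_simp
    rw [Finset.sum_congr rfl hsplit, Finset.sum_add_distrib, ← Finset.mul_sum, ← Finset.mul_sum,
      bern_sum_one, bern_sum_x x K hK]
    have hne : u - l ≠ 0 := hul.ne'
    rw [mul_one, hxdef]
    field_simp
    ring
  rcases le_or_gt z 0 with hz0 | hz0
  · rw [max_eq_left hz0]
    apply Finset.sum_nonneg
    intro k hk
    apply mul_nonneg
    apply mul_nonneg (le_max_left _ _) (Nat.cast_nonneg _)
    apply div_nonneg
    · exact mul_nonneg (pow_nonneg (by linarith) _) (pow_nonneg (by linarith) _)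
    · exact pow_nonneg (le_of_lt hul) _
  · rw [max_eq_right (le_of_lt hz0)]
    calc z = ∑ k ∈ Finset.range (K + 1),
        (l + ((k : ℝ) / (K : ℝ)) * (u - l)) *
          ((K.choose k : ℝ) * ((u - z) ^ (K - k) * (z - l) ^ k / (u - l) ^ K)) := hrepr.symm
      _ ≤ ∑ k ∈ Finset.range (K + 1),
        max 0 (l + ((k : ℝ) / (K : ℝ)) * (u - l)) * (K.choose k : ℝ) *
          ((u - z) ^ (K - k) * (z - l) ^ k / (u - l) ^ K) := by
          apply Finset.sum_le_sum
          intro k hk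
          rw [mul_assoc]
          exact mul_le_mul_of_nonneg_right (le_max_right _ _) (hwnn k hk)
end

section
/- Let l, u be real numbers with l < u, let K ≥ 1 be a natural number, and let f : ℝ → ℝ be convex on [l, u]. With (B_K f)(z) = Σ_{k=0}^{K} f(l + (k/K)(u − l)) · C(K,k) · (u − z)^{K−k} (z − l)^k / (u − l)^K the degree-K Bernstein polynomial of f on [l,u], for every z ∈ [l, u] one has (B_{K+1} f)(z) ≤ (B_K f)(z); i.e., the Bernstein over-approximations of a convex function become tighter as the degree increases. -/
lemma bern_key (K : ℕ) (hK : 1 ≤ K) (g : ℝ → ℝ)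
    (hg : ∀ a b la mu : ℝ, a ∈ Set.Icc (0:ℝ) 1 → b ∈ Set.Icc (0:ℝ) 1 →
      0 ≤ la → 0 ≤ mu → la + mu = 1 → g (la * a + mu * b) ≤ la * g a + mu * g b)
    (s t : ℝ) (hs : 0 ≤ s) (ht : 0 ≤ t) (hst : s + t = 1) :
    (∑ k ∈ Finset.range (K + 2),
        g ((k : ℝ) / ((K : ℝ) + 1)) * (((K + 1).choose k : ℕ) : ℝ) *
          (s ^ (K + 1 - k) * t ^ k)) ≤
    ∑ k ∈ Finset.range (K + 1),
        g ((k : ℝ) / (K : ℝ)) * ((K.choose k : ℕ) : ℝ) * (s ^ (K - k) * t ^ k) := by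
  have hKR : (1:ℝ) ≤ (K:ℝ) := by exact_mod_cast hK
  set A : ℕ → ℝ := fun k => g ((k : ℝ) / (K : ℝ)) * ((K.choose k : ℕ) : ℝ) *
      (s ^ (K + 1 - k) * t ^ k) with hA
  set D : ℕ → ℝ := fun k => if k = 0 then 0 else
      g (((k - 1 : ℕ) : ℝ) / (K : ℝ)) * ((K.choose (k - 1) : ℕ) : ℝ) *
      (s ^ (K + 1 - k) * t ^ k) with hD
  have hRHS : (∑ k ∈ Finset.range (K + 1),
      g ((k : ℝ) / (K : ℝ)) * ((K.choose k : ℕ) : ℝ) * (s ^ (K - k) * t ^ k))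
      = ∑ k ∈ Finset.range (K + 2), (A k + D k) := by
    rw [Finset.sum_add_distrib]
    have h1 : (∑ k ∈ Finset.range (K + 2), A k)
        = ∑ k ∈ Finset.range (K + 1), A k := by
      rw [Finset.sum_range_succ]
      have h0 : K.choose (K + 1) = 0 := Nat.choose_eq_zero_of_lt (by omega)
      simp [hA, h0]
    have h2 : (∑ k ∈ Finset.range (K + 2), D k)
        = ∑ k ∈ Finset.range (K + 1),
            g ((k : ℝ) / (K : ℝ)) * ((K.choose k : ℕ) : ℝ) *
              (s ^ (K - k) * (t ^ k * t)) := by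
      rw [Finset.sum_range_succ']
      have hD0 : D 0 = 0 := by simp [hD]
      rw [hD0, add_zero]
      refine Finset.sum_congr rfl fun k hk => ?_
      have he : K + 1 - (k + 1) = K - k := by omega
      simp [hD, he, pow_succ]
    rw [h1, h2, ← Finset.sum_add_distrib]
    refine Finset.sum_congr rfl fun k hk => ?_
    have hkK : k ≤ K := by have := Finset.mem_range.mp hk; omega
    have hsp : s ^ (K + 1 - k) = s ^ (K - k) * s := by
      rw [← pow_succ]; congr 1; omega
    calc g ((k : ℝ) / (K : ℝ)) * ((K.choose k : ℕ) : ℝ) * (s ^ (K - k) * t ^ k)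
        = g ((k : ℝ) / (K : ℝ)) * ((K.choose k : ℕ) : ℝ) * (s ^ (K - k) * t ^ k)
            * (s + t) := by rw [hst, mul_one]
      _ = A k + g ((k : ℝ) / (K : ℝ)) * ((K.choose k : ℕ) : ℝ)
            * (s ^ (K - k) * (t ^ k * t)) := by
          simp only [hA, hsp]; ring
  rw [hRHS]
  refine Finset.sum_le_sum fun k hk => ?_
  have hk2 : k < K + 2 := Finset.mem_range.mp hk
  rcases Nat.eq_zero_or_pos k with hk0 | hk1
  · subst hk0
    simp [hA, hD]
  rcases eq_or_lt_of_le (Nat.lt_succ_iff.mp hk2) with hkK | hkK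
  · -- k = K + 1
    subst hkK
    have h0 : K.choose (K + 1) = 0 := Nat.choose_eq_zero_of_lt (by omega)
    have hne : (K + 1 : ℕ) ≠ 0 := by omega
    have hKne : (K:ℝ) ≠ 0 := by linarith
    simp only [hA, hD, if_neg hne, h0, Nat.cast_zero, mul_zero, zero_mul, zero_add,
      Nat.add_sub_cancel, Nat.choose_self, Nat.cast_one, mul_one, Nat.sub_self, pow_zero]
    have e1 : ((K + 1 : ℕ) : ℝ) / ((K : ℝ) + 1) = 1 := by
      push_cast; field_simp
    have e2 : ((K : ℕ) : ℝ) / (K : ℝ) = 1 := div_self hKne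
    simp only [e1, e2] at *
    exact le_rfl
  · -- 1 ≤ k ≤ K
    have hkK' : k ≤ K := by omega
    have hne : k ≠ 0 := by omega
    simp only [hA, hD, if_neg hne]
    have hw : (0:ℝ) ≤ s ^ (K + 1 - k) * t ^ k := by positivity
    set a : ℝ := ((k - 1 : ℕ) : ℝ) / (K : ℝ) with ha
    set b : ℝ := (k : ℝ) / (K : ℝ) with hb
    set la : ℝ := (k : ℝ) / ((K : ℝ) + 1) with hla
    set mu : ℝ := ((K : ℝ) + 1 - (k : ℝ)) / ((K : ℝ) + 1) with hmu
    have hkcast : ((k - 1 : ℕ) : ℝ) = (k : ℝ) - 1 := by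
      have : (1:ℕ) ≤ k := hk1
      push_cast [this]; ring
    have hkle : (k : ℝ) ≤ (K : ℝ) := by exact_mod_cast hkK'
    have hk1R : (1:ℝ) ≤ (k : ℝ) := by exact_mod_cast hk1
    have hKpos : (0:ℝ) < (K:ℝ) := by linarith
    have haI : a ∈ Set.Icc (0:ℝ) 1 := by
      constructor
      · apply div_nonneg _ (le_of_lt hKpos); rw [hkcast]; linarith
      · rw [div_le_one hKpos, hkcast]; linarith
    have hbI : b ∈ Set.Icc (0:ℝ) 1 := by
      constructor
      · positivity
      · rw [div_le_one hKpos]; linarith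
    have hla0 : 0 ≤ la := by positivity
    have hmu0 : 0 ≤ mu := by
      apply div_nonneg _ (by linarith); linarith
    have hlm : la + mu = 1 := by
      rw [hla, hmu]; field_simp; ring
    have hmid : la * a + mu * b = (k : ℝ) / ((K : ℝ) + 1) := by
      rw [hla, hmu, ha, hb, hkcast]
      field_simp
      ring
    have hconv := hg a b la mu haI hbI hla0 hmu0 hlm
    rw [hmid] at hconv
    -- binomial identities
    have hid1 : (((K + 1).choose k : ℕ) : ℝ) * la = ((K.choose (k - 1) : ℕ) : ℝ) := by
      have hn : (K + 1) * K.choose (k - 1) = (K + 1).choose k * k := by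
        have h' := Nat.add_one_mul_choose_eq K (k - 1)
        rw [show k - 1 + 1 = k by omega] at h'
        exact h'
      have hcast : ((K : ℝ) + 1) * ((K.choose (k - 1) : ℕ) : ℝ)
          = (((K + 1).choose k : ℕ) : ℝ) * (k : ℝ) := by exact_mod_cast hn
      rw [hla]
      field_simp
      linarith [hcast]
    have hid2 : (((K + 1).choose k : ℕ) : ℝ) * mu = ((K.choose k : ℕ) : ℝ) := by
      have hn : K.choose k * (K + 1) = (K + 1).choose k * (K + 1 - k) := by
        exact Nat.choose_mul_succ_eq K k
      have hsub : ((K + 1 - k : ℕ) : ℝ) = (K : ℝ) + 1 - (k : ℝ) := by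
        push_cast [Nat.le_succ_of_le hkK']; ring
      have hcast : ((K.choose k : ℕ) : ℝ) * ((K : ℝ) + 1)
          = (((K + 1).choose k : ℕ) : ℝ) * ((K : ℝ) + 1 - (k : ℝ)) := by
        rw [← hsub]; exact_mod_cast hn
      rw [hmu]
      field_simp
      linarith [hcast]
    have hC0 : (0:ℝ) ≤ (((K + 1).choose k : ℕ) : ℝ) := Nat.cast_nonneg _
    have h2 : g ((k : ℝ) / ((K : ℝ) + 1)) * (((K + 1).choose k : ℕ) : ℝ)
        ≤ g b * ((K.choose k : ℕ) : ℝ) + g a * ((K.choose (k - 1) : ℕ) : ℝ) := by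
      have := mul_le_mul_of_nonneg_right hconv hC0
      calc g ((k : ℝ) / ((K : ℝ) + 1)) * (((K + 1).choose k : ℕ) : ℝ)
          ≤ (la * g a + mu * g b) * (((K + 1).choose k : ℕ) : ℝ) := this
        _ = g a * ((((K + 1).choose k : ℕ) : ℝ) * la)
            + g b * ((((K + 1).choose k : ℕ) : ℝ) * mu) := by ring
        _ = g b * ((K.choose k : ℕ) : ℝ) + g a * ((K.choose (k - 1) : ℕ) : ℝ) := by
            rw [hid1, hid2]; ring
    calc g ((k : ℝ) / ((K : ℝ) + 1)) * (((K + 1).choose k : ℕ) : ℝ)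
          * (s ^ (K + 1 - k) * t ^ k)
        ≤ (g b * ((K.choose k : ℕ) : ℝ) + g a * ((K.choose (k - 1) : ℕ) : ℝ))
            * (s ^ (K + 1 - k) * t ^ k) := mul_le_mul_of_nonneg_right h2 hw
      _ = g b * ((K.choose k : ℕ) : ℝ) * (s ^ (K + 1 - k) * t ^ k)
          + g a * ((K.choose (k - 1) : ℕ) : ℝ) * (s ^ (K + 1 - k) * t ^ k) := by ring

/-- Monotonicity of Bernstein polynomials of a convex function:
the degree-(K+1) Bernstein polynomial on [l,u] is pointwise below the
degree-K one on [l,u]. -/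
theorem bernstein_monotone_in_degree_for_convex
    (l u : ℝ) (hlu : l < u) (K : ℕ) (hK : 1 ≤ K)
    (f : ℝ → ℝ) (hf : ConvexOn ℝ (Set.Icc l u) f) :
    ∀ z ∈ Set.Icc l u,
      (∑ k ∈ Finset.range (K + 2),
        f (l + ((k : ℝ) / ((K : ℝ) + 1)) * (u - l)) * ((K + 1).choose k : ℝ) *
          ((u - z) ^ (K + 1 - k) * (z - l) ^ k / (u - l) ^ (K + 1))) ≤
      ∑ k ∈ Finset.range (K + 1),
        f (l + ((k : ℝ) / (K : ℝ)) * (u - l)) * (K.choose k : ℝ) *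
          ((u - z) ^ (K - k) * (z - l) ^ k / (u - l) ^ K) := by
  intro z hz
  have hul : (0:ℝ) < u - l := sub_pos.2 hlu
  have hune : u - l ≠ 0 := ne_of_gt hul
  set t : ℝ := (z - l) / (u - l) with htdef
  set s : ℝ := (u - z) / (u - l) with hsdef
  have ht : 0 ≤ t := div_nonneg (by linarith [hz.1]) hul.le
  have hs : 0 ≤ s := div_nonneg (by linarith [hz.2]) hul.le
  have hst : s + t = 1 := by rw [hsdef, htdef]; field_simp; ring
  have hconvert : ∀ n k : ℕ, k ≤ n →
      (u - z) ^ (n - k) * (z - l) ^ k / (u - l) ^ n = s ^ (n - k) * t ^ k := by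
    intro n k hk
    rw [hsdef, htdef, div_pow, div_pow, div_mul_div_comm, ← pow_add,
      Nat.sub_add_cancel hk]
  set g : ℝ → ℝ := fun r => f (l + r * (u - l)) with hgdef
  have hg : ∀ a b la mu : ℝ, a ∈ Set.Icc (0:ℝ) 1 → b ∈ Set.Icc (0:ℝ) 1 →
      0 ≤ la → 0 ≤ mu → la + mu = 1 → g (la * a + mu * b) ≤ la * g a + mu * g b := by
    intro a b la mu ha hb hla hmu hlm
    have hx : l + a * (u - l) ∈ Set.Icc l u :=
      ⟨by nlinarith [ha.1], by nlinarith [ha.2]⟩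
    have hy : l + b * (u - l) ∈ Set.Icc l u :=
      ⟨by nlinarith [hb.1], by nlinarith [hb.2]⟩
    have hc := hf.2 hx hy hla hmu hlm
    simp only [smul_eq_mul] at hc
    have he : l + (la * a + mu * b) * (u - l)
        = la * (l + a * (u - l)) + mu * (l + b * (u - l)) := by
      linear_combination (-l) * hlm
    simpa [hgdef, he] using hc
  have key := bern_key K hK g hg s t hs ht hst
  calc (∑ k ∈ Finset.range (K + 2),
        f (l + ((k : ℝ) / ((K : ℝ) + 1)) * (u - l)) * ((K + 1).choose k : ℝ) *
          ((u - z) ^ (K + 1 - k) * (z - l) ^ k / (u - l) ^ (K + 1)))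
      = ∑ k ∈ Finset.range (K + 2),
          g ((k : ℝ) / ((K : ℝ) + 1)) * (((K + 1).choose k : ℕ) : ℝ) *
            (s ^ (K + 1 - k) * t ^ k) := by
        refine Finset.sum_congr rfl fun k hk => ?_
        rw [hconvert (K + 1) k (by have := Finset.mem_range.mp hk; omega)]
    _ ≤ ∑ k ∈ Finset.range (K + 1),
          g ((k : ℝ) / (K : ℝ)) * ((K.choose k : ℕ) : ℝ) * (s ^ (K - k) * t ^ k) := key
    _ = ∑ k ∈ Finset.range (K + 1),
          f (l + ((k : ℝ) / (K : ℝ)) * (u - l)) * (K.choose k : ℝ) *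
            ((u - z) ^ (K - k) * (z - l) ^ k / (u - l) ^ K) := by
        refine Finset.sum_congr rfl fun k hk => ?_
        rw [hconvert K k (by have := Finset.mem_range.mp hk; omega)]
end
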